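/- Let D be a discount function. Then D exhibits increasing impatience (II) if and only if the function t ↦ ln D(t) is concave on [0,∞); and D exhibits strictly II if and only if t ↦ ln D(t) is strictly concave on [0,∞). -/

import Mathlib

def IsDiscount (D : ℝ → ℝ) : Prop :=
  D 0 = 1 ∧ (∀ t, 0 ≤ t → 0 < D t) ∧ StrictAntiOn D (Set.Ici 0) ∧
    Filter.Tendsto D Filter.atTop (nhds 0)

def II (D : ℝ → ℝ) : Prop :=
  ∀ t s σ : ℝ, 0 ≤ t → t < s → 0 < σ → D t / D (t + σ) ≤ D s / D (s + σ)

def StrictII (D : ℝ → ℝ) : Prop :=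
  ∀ t s σ : ℝ, 0 ≤ t → t < s → 0 < σ → D t / D (t + σ) < D s / D (s + σ)

/-- Averages of initial segments of an antitone sequence are antitone in length. -/
lemma aux_sum_avg (d : ℕ → ℝ) (hd : ∀ i, d (i + 1) ≤ d i) {k n : ℕ} (hkn : k ≤ n) :
    (k : ℝ) * ∑ i ∈ Finset.range n, d i ≤ (n : ℝ) * ∑ i ∈ Finset.range k, d i := by
  have hanti : ∀ i j : ℕ, i ≤ j → d j ≤ d i := fun i j h =>
    (antitone_nat_of_succ_le hd) h
  rcases Nat.eq_zero_or_pos k with hk | hk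
  · subst hk; simp
  · have hsplit : ∑ i ∈ Finset.range n, d i
        = (∑ i ∈ Finset.range k, d i) + ∑ i ∈ Finset.Ico k n, d i :=
      (Finset.sum_range_add_sum_Ico d hkn).symm
    have h1 : (k : ℝ) * d (k - 1) ≤ ∑ i ∈ Finset.range k, d i := by
      have := Finset.card_nsmul_le_sum (Finset.range k) d (d (k - 1))
        (fun i hi => hanti i (k - 1) (by
          have := Finset.mem_range.mp hi; omega))
      simpa [nsmul_eq_mul] using this
    have h2 : ∑ i ∈ Finset.Ico k n, d i ≤ ((n - k : ℕ) : ℝ) * d (k - 1) := by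
      have := Finset.sum_le_card_nsmul (Finset.Ico k n) d (d (k - 1))
        (fun i hi => hanti (k - 1) i (by
          have := (Finset.mem_Ico.mp hi).1; omega))
      simpa [nsmul_eq_mul, Nat.card_Ico] using this
    have hcast : ((n - k : ℕ) : ℝ) = (n : ℝ) - (k : ℝ) := by
      push_cast [hkn]; ring
    rw [hsplit]
    rw [hcast] at h2
    have hk' : (0 : ℝ) ≤ (k : ℝ) := Nat.cast_nonneg k
    have hnk : (0 : ℝ) ≤ (n : ℝ) - (k : ℝ) := by
      have := (Nat.cast_le (α := ℝ)).mpr hkn; linarith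
    nlinarith [mul_le_mul_of_nonneg_left h2 hk', mul_le_mul_of_nonneg_left h1 hnk]

/-- An antitone function on `[0, ∞)` satisfying the Wright concavity inequality is concave. -/
lemma aux_wright_concave (f : ℝ → ℝ)
    (hanti : ∀ ⦃u v : ℝ⦄, 0 ≤ u → u ≤ v → f v ≤ f u)
    (hK : ∀ t s σ : ℝ, 0 ≤ t → t ≤ s → 0 ≤ σ → f t + f (s + σ) ≤ f (t + σ) + f s) :
    ConcaveOn ℝ (Set.Ici 0) f := by
  -- concavity along arithmetic progressions
  have hAP : ∀ x σ : ℝ, 0 ≤ x → 0 ≤ σ → ∀ k n : ℕ, k ≤ n →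
      ((n : ℝ) - k) * f x + (k : ℝ) * f (x + n * σ) ≤ (n : ℝ) * f (x + k * σ) := by
    intro x σ hx hσ k n hkn
    set F : ℕ → ℝ := fun i => f (x + i * σ) with hF
    set d : ℕ → ℝ := fun i => F (i + 1) - F i with hdd
    have hd : ∀ i, d (i + 1) ≤ d i := by
      intro i
      have h := hK (x + i * σ) (x + (i + 1 : ℕ) * σ) σ
        (by positivity) (by push_cast; nlinarith) hσ
      have e1 : x + (i : ℕ) * σ + σ = x + ((i + 1 : ℕ) : ℝ) * σ := by push_cast; ring
      have e2 : x + ((i + 1 : ℕ) : ℝ) * σ + σ = x + ((i + 2 : ℕ) : ℝ) * σ := by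
        push_cast; ring
      simp only [hdd, hF]
      rw [e1, e2] at h
      push_cast
      push_cast at h
      ring_nf at h ⊢
      linarith
    have hsum : ∀ m : ℕ, ∑ i ∈ Finset.range m, d i = F m - F 0 := by
      intro m; exact Finset.sum_range_sub F m
    have h := aux_sum_avg d hd hkn
    rw [hsum, hsum] at h
    have hF0 : F 0 = f x := by simp [hF]
    have hFk : F k = f (x + k * σ) := rfl
    have hFn : F n = f (x + n * σ) := rfl
    rw [hF0, hFk, hFn] at h
    nlinarith
  -- chord inequality at rational points
  have hQ : ∀ x z : ℝ, 0 ≤ x → x < z → ∀ k n : ℕ, 0 < k → k < n →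
      (1 - (k : ℝ) / n) * f x + ((k : ℝ) / n) * f z ≤ f (x + ((k : ℝ) / n) * (z - x)) := by
    intro x z hx hxz k n hk hkn
    have hn : (0 : ℝ) < n := by
      have : 0 < n := lt_trans hk hkn
      exact_mod_cast this
    have hσ : (0 : ℝ) ≤ (z - x) / n :=
      div_nonneg (by linarith) (Nat.cast_nonneg n)
    have h := hAP x ((z - x) / n) hx hσ k n hkn.le
    have e1 : x + (n : ℝ) * ((z - x) / n) = z := by field_simp; ring
    have e2 : x + (k : ℝ) * ((z - x) / n) = x + ((k : ℝ) / n) * (z - x) := by ring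
    rw [e1, e2] at h
    have hgoal : (n : ℝ) * ((1 - (k : ℝ) / n) * f x + ((k : ℝ) / n) * f z)
        = ((n : ℝ) - k) * f x + (k : ℝ) * f z := by field_simp; try ring
    have hmul : (n : ℝ) * ((1 - (k : ℝ) / n) * f x + ((k : ℝ) / n) * f z)
        ≤ (n : ℝ) * f (x + ((k : ℝ) / n) * (z - x)) := by rw [hgoal]; exact h
    exact le_of_mul_le_mul_left hmul hn
  -- full chord inequality
  apply LinearOrder.concaveOn_of_lt (convex_Ici 0)
  intro x hx z hz hxz a b ha hb hab
  simp only [smul_eq_mul]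
  have hx0 : (0 : ℝ) ≤ x := hx
  have hzx : 0 < z - x := by linarith
  have hb1 : b < 1 := by linarith
  have hy0 : 0 ≤ a * x + b * z := by nlinarith
  have hfzx : f z ≤ f x := hanti hx0 hxz.le
  set c : ℝ := f x - f z with hc
  have hc0 : 0 ≤ c := by simp [hc]; linarith
  refine le_of_forall_pos_le_add ?_
  intro ε hε
  have hcpos : (0 : ℝ) < c + 1 := by linarith
  have hδ : 0 < ε / (c + 1) := div_pos hε hcpos
  obtain ⟨q, hq1, hq2⟩ := exists_rat_btwn
    (show b < min 1 (b + ε / (c + 1)) from lt_min hb1 (by linarith))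
  have hq2a : (q : ℝ) < 1 := lt_of_lt_of_le hq2 (min_le_left _ _)
  have hq2b : (q : ℝ) < b + ε / (c + 1) := lt_of_lt_of_le hq2 (min_le_right _ _)
  have hqpos : 0 < q := by
    have : (0 : ℝ) < (q : ℝ) := lt_trans hb hq1
    exact_mod_cast this
  have hqlt1 : q < 1 := by exact_mod_cast hq2a
  have hnum : 0 < q.num := Rat.num_pos.mpr hqpos
  have hden : 0 < q.den := q.pos
  set k : ℕ := q.num.toNat with hk
  set n : ℕ := q.den with hn
  have hkpos : 0 < k := by
    rw [hk]
    exact Int.lt_toNat.mpr (by exact_mod_cast hnum)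
  have hqcast : (q : ℝ) = (k : ℝ) / (n : ℝ) := by
    rw [Rat.cast_def]
    congr 1
    simp [hk]
    exact_mod_cast (Int.toNat_of_nonneg hnum.le).symm
  have hklt : k < n := by
    by_contra h
    push_neg at h
    have hge : (1 : ℝ) ≤ (k : ℝ) / (n : ℝ) := by
      rw [le_div_iff₀ (by exact_mod_cast hden : (0:ℝ) < (n:ℝ)), one_mul]
      exact_mod_cast h
    rw [← hqcast] at hge
    linarith
  have hch := hQ x z hx0 hxz k n hkpos hklt
  rw [← hqcast] at hch
  -- monotonicity step
  have hstep : f (x + (q : ℝ) * (z - x)) ≤ f (a * x + b * z) := by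
    apply hanti hy0
    have : a * x + b * z = x + b * (z - x) := by nlinarith [hab]
    rw [this]
    nlinarith [hq1, hzx]
  have key : (1 - (q : ℝ)) * f x + (q : ℝ) * f z ≤ f (a * x + b * z) :=
    le_trans hch hstep
  have hq1' : b < (q : ℝ) := hq1
  have hcb : ((q : ℝ) - b) * c ≤ ε := by
    have h1 : ((q : ℝ) - b) * c ≤ (ε / (c + 1)) * c := by
      apply mul_le_mul_of_nonneg_right _ hc0
      linarith
    have h2 : (ε / (c + 1)) * c ≤ ε := by
      rw [div_mul_eq_mul_div, div_le_iff₀ hcpos]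
      nlinarith
    exact le_trans h1 h2
  have expand : a * f x + b * f z
      = (1 - (q : ℝ)) * f x + (q : ℝ) * f z + ((q : ℝ) - b) * c := by
    have : a = 1 - b := by linarith
    rw [this, hc]; ring
  linarith [key, hcb, expand]

/-- A concave function that is strictly concave at midpoints is strictly concave. -/
lemma aux_strict_upgrade (f : ℝ → ℝ) (hconc : ConcaveOn ℝ (Set.Ici 0) f)
    (hmid : ∀ u v : ℝ, 0 ≤ u → u < v → f u + f v < 2 * f ((u + v) / 2)) :
    StrictConcaveOn ℝ (Set.Ici 0) f := by
  apply LinearOrder.strictConcaveOn_of_lt (convex_Ici 0)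
  intro x hx z hz hxz a b ha hb hab
  simp only [smul_eq_mul]
  have hx0 : (0 : ℝ) ≤ x := hx
  have hz0 : (0 : ℝ) ≤ z := hz
  have hm : f x + f z < 2 * f ((x + z) / 2) := hmid x z hx0 hxz
  have hm0 : (0 : ℝ) ≤ (x + z) / 2 := by linarith
  have hmem : (x + z) / 2 ∈ Set.Ici (0 : ℝ) := hm0
  rcases lt_trichotomy b (1 / 2) with hb2 | hb2 | hb2
  · -- b < 1/2 : combine x and midpoint
    have hc : (0 : ℝ) ≤ 1 - 2 * b := by linarith
    have hd : (0 : ℝ) ≤ 2 * b := by linarith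
    have hcd : (1 - 2 * b) + 2 * b = 1 := by ring
    have hcomb := hconc.2 hx hmem hc hd hcd
    simp only [smul_eq_mul] at hcomb
    have he : (1 - 2 * b) * x + 2 * b * ((x + z) / 2) = a * x + b * z := by
      have : a = 1 - b := by linarith
      rw [this]; ring
    rw [he] at hcomb
    have ha' : a = 1 - b := by linarith
    have h3 : b * (f x + f z) < b * (2 * f ((x + z) / 2)) :=
      mul_lt_mul_of_pos_left hm hb
    calc a * f x + b * f z = (1 - 2 * b) * f x + b * (f x + f z) := by rw [ha']; ring
      _ < (1 - 2 * b) * f x + b * (2 * f ((x + z) / 2)) := by linarith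
      _ = (1 - 2 * b) * f x + 2 * b * f ((x + z) / 2) := by ring
      _ ≤ f (a * x + b * z) := hcomb
  · -- b = 1/2
    have ha2 : a = 1 / 2 := by linarith
    subst ha2
    rw [hb2]
    have he : 1 / 2 * x + 1 / 2 * z = (x + z) / 2 := by ring
    rw [he]
    linarith
  · -- b > 1/2 : combine midpoint and z
    have hc : (0 : ℝ) ≤ 2 * a := by linarith
    have hd : (0 : ℝ) ≤ 2 * b - 1 := by linarith
    have hcd : 2 * a + (2 * b - 1) = 1 := by linarith
    have hcomb := hconc.2 hmem hz hc hd hcd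
    simp only [smul_eq_mul] at hcomb
    have he : 2 * a * ((x + z) / 2) + (2 * b - 1) * z = a * x + b * z := by
      have : b = 1 - a := by linarith
      rw [this]; ring
    rw [he] at hcomb
    have hb' : b = 1 - a := by linarith
    have h3 : a * (f x + f z) < a * (2 * f ((x + z) / 2)) :=
      mul_lt_mul_of_pos_left hm ha
    calc a * f x + b * f z = a * (f x + f z) + (2 * b - 1) * f z := by rw [hb']; ring
      _ < a * (2 * f ((x + z) / 2)) + (2 * b - 1) * f z := by linarith
      _ = 2 * a * f ((x + z) / 2) + (2 * b - 1) * f z := by ring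
      _ ≤ f (a * x + b * z) := hcomb

theorem ii_iff_log_concave (D : ℝ → ℝ) (hD : IsDiscount D) :
    (II D ↔ ConcaveOn ℝ (Set.Ici 0) (fun t => Real.log (D t))) ∧
    (StrictII D ↔ StrictConcaveOn ℝ (Set.Ici 0) (fun t => Real.log (D t))) := by
  obtain ⟨hD0, hpos, hsa, _⟩ := hD
  set f : ℝ → ℝ := fun t => Real.log (D t) with hf
  -- conversion between the ratio inequalities and log inequalities
  have hconv : ∀ t s σ : ℝ, 0 ≤ t → t < s → 0 < σ →
      ((D t / D (t + σ) ≤ D s / D (s + σ) ↔ f t + f (s + σ) ≤ f (t + σ) + f s) ∧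
       (D t / D (t + σ) < D s / D (s + σ) ↔ f t + f (s + σ) < f (t + σ) + f s)) := by
    intro t s σ ht hts hσ
    have hs : 0 ≤ s := le_trans ht hts.le
    have p1 : 0 < D t := hpos t ht
    have p2 : 0 < D (t + σ) := hpos _ (by linarith)
    have p3 : 0 < D s := hpos s hs
    have p4 : 0 < D (s + σ) := hpos _ (by linarith)
    have e1 : D t / D (t + σ) ≤ D s / D (s + σ) ↔ D t * D (s + σ) ≤ D s * D (t + σ) :=
      div_le_div_iff₀ p2 p4
    have e1' : D t / D (t + σ) < D s / D (s + σ) ↔ D t * D (s + σ) < D s * D (t + σ) :=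
      div_lt_div_iff₀ p2 p4
    have e2 : D t * D (s + σ) ≤ D s * D (t + σ) ↔ f t + f (s + σ) ≤ f (t + σ) + f s := by
      rw [← Real.log_le_log_iff (by positivity) (by positivity),
        Real.log_mul p1.ne' p4.ne', Real.log_mul p3.ne' p2.ne']
      constructor <;> intro h <;> simp only [hf] at h ⊢ <;> linarith
    have e2' : D t * D (s + σ) < D s * D (t + σ) ↔ f t + f (s + σ) < f (t + σ) + f s := by
      rw [← Real.log_lt_log_iff (by positivity) (by positivity),
        Real.log_mul p1.ne' p4.ne', Real.log_mul p3.ne' p2.ne']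
      constructor <;> intro h <;> simp only [hf] at h ⊢ <;> linarith
    exact ⟨e1.trans e2, e1'.trans e2'⟩
  have hanti : ∀ ⦃u v : ℝ⦄, 0 ≤ u → u ≤ v → f v ≤ f u := by
    intro u v hu huv
    rcases eq_or_lt_of_le huv with h | h
    · exact le_of_eq (congrArg f h.symm)
    · have := hsa hu (le_trans hu huv) h
      exact (Real.log_le_log_iff (hpos v (le_trans hu huv)) (hpos u hu)).mpr this.le
  -- II implies concavity
  have fwd : II D → ConcaveOn ℝ (Set.Ici 0) f := by
    intro hii
    apply aux_wright_concave f hanti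
    intro t s σ ht hts hσ
    rcases eq_or_lt_of_le hts with h | h
    · subst h; linarith [le_refl (f t + f (t + σ))]
    rcases eq_or_lt_of_le hσ with h' | h'
    · rw [← h']; simp
    · exact ((hconv t s σ ht h h').1).mp (hii t s σ ht h h')
  -- concavity implies II (and strict versions)
  have bwd : ∀ t s σ : ℝ, 0 ≤ t → t < s → 0 < σ →
      (ConcaveOn ℝ (Set.Ici 0) f → f t + f (s + σ) ≤ f (t + σ) + f s) ∧
      (StrictConcaveOn ℝ (Set.Ici 0) f → f t + f (s + σ) < f (t + σ) + f s) := by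
    intro t s σ ht hts hσ
    have hs : 0 ≤ s := le_trans ht hts.le
    set w : ℝ := s + σ - t with hw
    have hw0 : 0 < w := by simp [hw]; linarith
    have ht1 : t ∈ Set.Ici (0 : ℝ) := ht
    have ht2 : s + σ ∈ Set.Ici (0 : ℝ) := by simp; linarith
    have ha1 : 0 < (s - t) / w := by apply div_pos; linarith; exact hw0
    have hb1 : 0 < σ / w := by positivity
    have hab1 : (s - t) / w + σ / w = 1 := by field_simp [hw]; ring
    have hab2 : σ / w + (s - t) / w = 1 := by linarith
    have hne : t ≠ s + σ := by intro h; rw [h] at hts; linarith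
    have key1 : (s - t) / w * t + σ / w * (s + σ) = t + σ := by
      field_simp [hw]; ring
    have key2 : σ / w * t + (s - t) / w * (s + σ) = s := by
      field_simp [hw]; ring
    constructor
    · intro hconc
      have h1 := hconc.2 ht1 ht2 ha1.le hb1.le hab1
      have h2 := hconc.2 ht1 ht2 hb1.le ha1.le hab2
      simp only [smul_eq_mul] at h1 h2
      rw [key1] at h1; rw [key2] at h2
      have hsum : ((s - t) / w + σ / w) * f t + (σ / w + (s - t) / w) * f (s + σ)
          ≤ f (t + σ) + f s := by nlinarith [h1, h2]
      rw [hab1, hab2] at hsum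
      linarith
    · intro hconc
      have h1 := hconc.2 ht1 ht2 hne ha1 hb1 hab1
      have h2 := hconc.2 ht1 ht2 hne hb1 ha1 hab2
      simp only [smul_eq_mul] at h1 h2
      rw [key1] at h1; rw [key2] at h2
      have hsum : ((s - t) / w + σ / w) * f t + (σ / w + (s - t) / w) * f (s + σ)
          < f (t + σ) + f s := by nlinarith [h1, h2]
      rw [hab1, hab2] at hsum
      linarith
  constructor
  · constructor
    · exact fwd
    · intro hconc t s σ ht hts hσ
      exact ((hconv t s σ ht hts hσ).1).mpr ((bwd t s σ ht hts hσ).1 hconc)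
  · constructor
    · intro hsii
      have hii : II D := fun t s σ ht hts hσ => (hsii t s σ ht hts hσ).le
      apply aux_strict_upgrade f (fwd hii)
      intro u v hu huv
      have h := (hconv u ((u + v) / 2) ((v - u) / 2) hu (by linarith) (by linarith)).2
      have hlt := hsii u ((u + v) / 2) ((v - u) / 2) hu (by linarith) (by linarith)
      have e1 : (u + v) / 2 + (v - u) / 2 = v := by ring
      have e2 : u + (v - u) / 2 = (u + v) / 2 := by ring
      rw [e1, e2] at h hlt
      have := h.mp hlt
      linarith
    · intro hconc t s σ ht hts hσ
      exact ((hconv t s σ ht hts hσ).2).mpr ((bwd t s σ ht hts hσ).2 hconc)
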